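/- arXiv:2312.11021 — 6 statements merged into one kernel-verified Lean document; each statement's English description precedes it below -/
import Mathlib

section
/- Let (Ω, μ) be a finite measure space, let a ≤ b be real numbers, let γ > 0, and let U_ad = {u ∈ L²(μ) : a ≤ u ≤ b μ-a.e.}. Let z ∈ L²(μ) and u ∈ U_ad. Then the variational inequality ∫_Ω (γu + z)(v − u) dμ ≥ 0 for all v ∈ U_ad holds if and only if u(x) = max(a, min(−z(x)/γ, b)) for μ-a.e. x ∈ Ω. (This is the pointwise projection formula u = P_{U_ad}{−z/γ} characterizing the first-order optimality condition.) -/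
open MeasureTheory

lemma proj_key (a b w t : ℝ) (hab : a ≤ b) (ht1 : a ≤ t) (ht2 : t ≤ b) :
    0 ≤ (max a (min w b) - w) * (t - max a (min w b)) := by
  rcases le_total w a with h | h
  · have hm : min w b = w := min_eq_left (h.trans hab)
    rw [hm, max_eq_left h]
    have h1 : 0 ≤ a - w := by linarith
    have h2 : 0 ≤ t - a := by linarith
    positivity
  · rcases le_total w b with h' | h'
    · rw [min_eq_left h', max_eq_right h]
      simp
    · rw [min_eq_right h', max_eq_right hab]
      nlinarith

lemma int_mul {Ω : Type*} [MeasurableSpace Ω] {μ : Measure Ω} {f g : Ω → ℝ}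
    (hf : MemLp f 2 μ) (hg : MemLp g 2 μ) :
    Integrable (fun x => f x * g x) μ := by
  have h := L2.integrable_inner (𝕜 := ℝ) (hf.toLp f) (hg.toLp g)
  refine h.congr ?_
  filter_upwards [hf.coeFn_toLp, hg.coeFn_toLp] with x h1 h2
  simp [h1, h2, RCLike.inner_apply, mul_comm]

/-- On a finite measure space `(Ω, μ)`, with `a ≤ b`, `γ > 0`,
`U_ad = {u ∈ L²(μ) : a ≤ u ≤ b μ-a.e.}`, `z ∈ L²(μ)` and `u ∈ U_ad`, the variational
inequality `∫ (γu + z)(v − u) dμ ≥ 0` for all `v ∈ U_ad` holds iff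
`u = max(a, min(−z/γ, b))` μ-a.e. (pointwise projection formula). -/
theorem stmt_0 {Ω : Type*} [MeasurableSpace Ω] (μ : Measure Ω) [IsFiniteMeasure μ]
    (a b : ℝ) (hab : a ≤ b) (γ : ℝ) (hγ : 0 < γ)
    (Uad : Set (Lp ℝ 2 μ))
    (hUad : Uad = {u : Lp ℝ 2 μ | ∀ᵐ x ∂μ, a ≤ u x ∧ u x ≤ b})
    (z u : Lp ℝ 2 μ) (hu : u ∈ Uad) :
    (∀ v ∈ Uad, 0 ≤ ∫ x, (γ * u x + z x) * (v x - u x) ∂μ) ↔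
      (∀ᵐ x ∂μ, u x = max a (min (-(z x) / γ) b)) := by
  subst hUad
  set P : Ω → ℝ := fun x => max a (min (-(z x) / γ) b) with hPdef
  have hγ' : γ ≠ 0 := hγ.ne'
  have hfact : ∀ x, γ * P x + z x = γ * (P x - (-(z x) / γ)) := by
    intro x; field_simp; ring
  -- bounds on P
  have hPa : ∀ x, a ≤ P x := fun x => le_max_left _ _
  have hPb : ∀ x, P x ≤ b := fun x => max_le hab (min_le_right _ _)
  -- measurability and MemLp of P
  have hPm : AEStronglyMeasurable P μ := by
    have hz : AEMeasurable (fun x => -(z x) / γ) μ :=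
      ((Lp.aestronglyMeasurable z).aemeasurable.neg).div_const γ
    exact (aemeasurable_const.sup (hz.inf aemeasurable_const)).aestronglyMeasurable
  have hPmem : MemLp P 2 μ := by
    refine MemLp.of_bound hPm (max |a| |b|) (Filter.Eventually.of_forall fun x => ?_)
    rw [Real.norm_eq_abs, abs_le]
    constructor
    · have : -|a| ≤ a := neg_abs_le a
      have := hPa x
      have := le_max_left |a| |b|
      linarith
    · have : b ≤ |b| := le_abs_self b
      have := hPb x
      have := le_max_right |a| |b|
      linarith
  constructor
  · intro h
    set v := hPmem.toLp P with hv
    have hvcoe : (v : Ω → ℝ) =ᵐ[μ] P := hPmem.coeFn_toLp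
    have hvmem : v ∈ {u : Lp ℝ 2 μ | ∀ᵐ x ∂μ, a ≤ u x ∧ u x ≤ b} := by
      filter_upwards [hvcoe] with x hx
      rw [hx]; exact ⟨hPa x, hPb x⟩
    have H := h v hvmem
    -- replace v by P in the integral
    have hA : ∫ x, (γ * u x + z x) * ((v : Ω → ℝ) x - u x) ∂μ
        = ∫ x, (γ * u x + z x) * (P x - u x) ∂μ := by
      refine integral_congr_ae ?_
      filter_upwards [hvcoe] with x hx
      rw [hx]
    rw [hA] at H
    -- integrability
    have hq : MemLp (fun x => γ * u x + z x) 2 μ :=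
      ((Lp.memLp u).const_mul γ).add (Lp.memLp z)
    have hqP : MemLp (fun x => γ * P x + z x) 2 μ :=
      (hPmem.const_mul γ).add (Lp.memLp z)
    have hd1 : MemLp (fun x => P x - u x) 2 μ := hPmem.sub (Lp.memLp u)
    have hd2 : MemLp (fun x => u x - P x) 2 μ := (Lp.memLp u).sub hPmem
    have intA : Integrable (fun x => (γ * u x + z x) * (P x - u x)) μ := int_mul hq hd1
    have intB : Integrable (fun x => (γ * P x + z x) * (u x - P x)) μ := int_mul hqP hd2
    have intSq : Integrable (fun x => (u x - P x) ^ 2) μ := by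
      have := int_mul hd2 hd2
      simpa [pow_two] using this
    -- B is a.e. nonneg
    have hBnn : 0 ≤ ∫ x, (γ * P x + z x) * (u x - P x) ∂μ := by
      refine integral_nonneg_of_ae ?_
      filter_upwards [hu] with x hx
      rw [hfact x, mul_assoc]
      exact mul_nonneg hγ.le (proj_key a b (-(z x) / γ) (u x) hab hx.1 hx.2)
    -- sum identity
    have hsum : (∫ x, (γ * u x + z x) * (P x - u x) ∂μ)
        + (∫ x, (γ * P x + z x) * (u x - P x) ∂μ)
        = -(γ * ∫ x, (u x - P x) ^ 2 ∂μ) := by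
      rw [← integral_add intA intB, ← integral_const_mul, ← integral_neg]
      refine integral_congr_ae (Filter.Eventually.of_forall fun x => ?_)
      ring
    have hsq_nonneg : 0 ≤ ∫ x, (u x - P x) ^ 2 ∂μ :=
      integral_nonneg fun x => sq_nonneg _
    have hzero : ∫ x, (u x - P x) ^ 2 ∂μ = 0 := by nlinarith
    have := (integral_eq_zero_iff_of_nonneg (fun x => sq_nonneg _) intSq).mp hzero
    filter_upwards [this] with x hx
    have hx' : (u x - P x) ^ 2 = 0 := by simpa using hx
    have : u x - P x = 0 := pow_eq_zero_iff two_ne_zero |>.mp hx'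
    linarith [this]
  · intro h v hv
    refine integral_nonneg_of_ae ?_
    filter_upwards [h, hv] with x hx hvx
    rw [hx]
    have : γ * P x + z x = γ * (P x - (-(z x) / γ)) := hfact x
    rw [show (γ * max a (min (-(z x) / γ) b) + z x) = γ * (P x - (-(z x) / γ)) from this,
      mul_assoc]
    exact mul_nonneg hγ.le (proj_key a b (-(z x) / γ) (v x) hab hvx.1 hvx.2)
end

section
/- Let H and G be real Hilbert spaces, W a subspace of H, V a real vector space, T : V → G a linear map, a : V × V → ℝ a symmetric bilinear form, and b : W × V → ℝ a bilinear form. Fix f ∈ H, g ∈ G, d ∈ G. For u ∈ H, say that (p_u, y_u, r_u, z_u) ∈ V × W × V × W solves the discrete optimality system for u if: a(p_u, v) + b(y_u, v) = ⟨g, T v⟩_G for all v ∈ V; b(w, p_u) = −⟨f + u, w⟩_H for all w ∈ W; a(r_u, v) + b(z_u, v) = ⟨d − T p_u, T v⟩_G for all v ∈ V; and b(w, r_u) = 0 for all w ∈ W. If (p_u, y_u, r_u, z_u) solves the system for u and (p_v, y_v, r_v, z_v) solves it for v, then ⟨z_v − z_u, v − u⟩_H = ‖T(p_v − p_u)‖²_G.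 (This is the key identity (4.14) in the proof of Lemma 4.7, with T the normal trace map v_h ↦ v_h·n on Γ, a the stabilized discrete bilinear form a_h, b(w, v) = ∫_Ω w div v dx, and d = y_d.) -/
open scoped RealInnerProductSpace

/-- The discrete optimality system for the control `u`: `(p, y, r, z) ∈ V × W × V × W`
satisfies `a(p, v) + b(y, v) = ⟨g, T v⟩_G` for all `v ∈ V`,
`b(w, p) = −⟨f + u, w⟩_H` for all `w ∈ W`,
`a(r, v) + b(z, v) = ⟨d − T p, T v⟩_G` for all `v ∈ V`, and
`b(w, r) = 0` for all `w ∈ W`. -/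
def SolvesDiscreteSystem {H G V : Type*}
    [NormedAddCommGroup H] [InnerProductSpace ℝ H]
    [NormedAddCommGroup G] [InnerProductSpace ℝ G]
    [AddCommGroup V] [Module ℝ V]
    (W : Submodule ℝ H) (T : V →ₗ[ℝ] G)
    (a : V →ₗ[ℝ] V →ₗ[ℝ] ℝ) (b : W →ₗ[ℝ] V →ₗ[ℝ] ℝ)
    (f : H) (g : G) (d : G) (u : H) (p : V) (y : W) (r : V) (z : W) : Prop :=
  (∀ v : V, a p v + b y v = ⟪g, T v⟫) ∧
  (∀ w : W, b w p = -⟪f + u, (w : H)⟫) ∧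
  (∀ v : V, a r v + b z v = ⟪d - T p, T v⟫) ∧
  (∀ w : W, b w r = 0)

/-- If `(p_u, y_u, r_u, z_u)` solves the discrete optimality system for `u`
and `(p_v, y_v, r_v, z_v)` solves it for `v`, with `a` a symmetric bilinear form, then
`⟨z_v − z_u, v − u⟩_H = ‖T(p_v − p_u)‖²_G` (identity (4.14) in the proof of Lemma 4.7). -/
theorem stmt_3 {H G V : Type*}
    [NormedAddCommGroup H] [InnerProductSpace ℝ H]
    [NormedAddCommGroup G] [InnerProductSpace ℝ G]
    [AddCommGroup V] [Module ℝ V]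
    (W : Submodule ℝ H) (T : V →ₗ[ℝ] G)
    (a : V →ₗ[ℝ] V →ₗ[ℝ] ℝ) (b : W →ₗ[ℝ] V →ₗ[ℝ] ℝ)
    (ha : ∀ v w : V, a v w = a w v)
    (f : H) (g : G) (d : G) (u v : H)
    (pu pv : V) (yu yv : W) (ru rv : V) (zu zv : W)
    (hu : SolvesDiscreteSystem W T a b f g d u pu yu ru zu)
    (hv : SolvesDiscreteSystem W T a b f g d v pv yv rv zv) :
    ⟪((zv : H) - (zu : H)), v - u⟫ = ‖T (pv - pu)‖ ^ 2 := by
  obtain ⟨hu1, hu2, hu3, hu4⟩ := hu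
  obtain ⟨hv1, hv2, hv3, hv4⟩ := hv
  have E1 := hv1 (rv - ru); have E1' := hu1 (rv - ru)
  have E2 := hv2 (zv - zu); have E2' := hu2 (zv - zu)
  have E3 := hv3 (pv - pu); have E3' := hu3 (pv - pu)
  have E4 := hv4 (yv - yu); have E4' := hu4 (yv - yu)
  have hsym := ha (pv - pu) (rv - ru)
  have hnorm : ⟪T (pv - pu), T (pv - pu)⟫ = ‖T (pv - pu)‖ ^ 2 :=
    real_inner_self_eq_norm_sq _
  have hcomm : ⟪v - u, ((zv : H) - (zu : H))⟫ = ⟪((zv : H) - (zu : H)), v - u⟫ :=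
    real_inner_comm _ _
  have hcomm2 : ⟪T pu, T pv⟫ = ⟪T pv, T pu⟫ := real_inner_comm _ _
  simp only [map_sub, LinearMap.sub_apply, inner_sub_left, inner_sub_right,
    inner_add_left, inner_add_right, Submodule.coe_sub] at *
  linarith
end

section
/- Let H and G be real Hilbert spaces, W a subspace of H, V a real vector space, T : V → G a linear map, a : V × V → ℝ a symmetric bilinear form, and b : W × V → ℝ a bilinear form. Fix f ∈ H, g ∈ G, d ∈ G and γ > 0. Suppose for u, v ∈ H the quadruples (p_u, y_u, r_u, z_u) and (p_v, y_v, r_v, z_v) solve the discrete optimality system for u and for v respectively, and define J′(u)(w) := γ⟨u, w⟩_H + ⟨z_u, w⟩_H and J′(v)(w) := γ⟨v, w⟩_H + ⟨z_v, w⟩_H. Then J′(v)(v − u) − J′(u)(v − u) = γ‖v − u‖²_H + ‖T(p_v − p_u)‖²_G. (This is Lemma 4.7.) -/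
open scoped RealInnerProductSpace

/-- **Lemma 4.7.** If `(p_u, y_u, r_u, z_u)` and `(p_v, y_v, r_v, z_v)` solve
the discrete optimality system for `u` and `v` respectively, `a` is symmetric, `γ > 0`, and
`J′(u)(w) = γ⟨u, w⟩_H + ⟨z_u, w⟩_H`, `J′(v)(w) = γ⟨v, w⟩_H + ⟨z_v, w⟩_H`, then
`J′(v)(v − u) − J′(u)(v − u) = γ‖v − u‖²_H + ‖T(p_v − p_u)‖²_G`. -/
theorem stmt_4 {H G V : Type*}
    [NormedAddCommGroup H] [InnerProductSpace ℝ H]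
    [NormedAddCommGroup G] [InnerProductSpace ℝ G]
    [AddCommGroup V] [Module ℝ V]
    (W : Submodule ℝ H) (T : V →ₗ[ℝ] G)
    (a : V →ₗ[ℝ] V →ₗ[ℝ] ℝ) (b : W →ₗ[ℝ] V →ₗ[ℝ] ℝ)
    (ha : ∀ v w : V, a v w = a w v)
    (f : H) (g : G) (d : G) (γ : ℝ) (hγ : 0 < γ) (u v : H)
    (pu pv : V) (yu yv : W) (ru rv : V) (zu zv : W)
    (hu : SolvesDiscreteSystem W T a b f g d u pu yu ru zu)
    (hv : SolvesDiscreteSystem W T a b f g d v pv yv rv zv)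
    (J'u J'v : H → ℝ)
    (hJ'u : ∀ w : H, J'u w = γ * ⟪u, w⟫ + ⟪(zu : H), w⟫)
    (hJ'v : ∀ w : H, J'v w = γ * ⟪v, w⟫ + ⟪(zv : H), w⟫) :
    J'v (v - u) - J'u (v - u) = γ * ‖v - u‖ ^ 2 + ‖T (pv - pu)‖ ^ 2 := by

  obtain ⟨hu1, hu2, hu3, hu4⟩ := hu
  obtain ⟨hv1, hv2, hv3, hv4⟩ := hv
  -- difference equations
  have hδ2 : ∀ w : W, b w (pv - pu) = -⟪v - u, (w : H)⟫ := by
    intro w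
    have := hv2 w
    have := hu2 w
    rw [map_sub, hv2 w, hu2 w]
    rw [inner_sub_left, inner_add_left, inner_add_left]
    ring
  have hδ4 : a (pv - pu) (rv - ru) = 0 := by
    have h1 : a pv (rv - ru) + b yv (rv - ru) = a pu (rv - ru) + b yu (rv - ru) := by
      rw [hv1 (rv - ru), hu1 (rv - ru)]
    have h2 : b yv (rv - ru) = 0 := by
      rw [map_sub, hv4 yv, hu4 yv]; ring
    have h3 : b yu (rv - ru) = 0 := by
      rw [map_sub, hv4 yu, hu4 yu]; ring
    have : a (pv - pu) (rv - ru) = a pv (rv - ru) - a pu (rv - ru) := by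
      simp only [map_sub, LinearMap.sub_apply]; ring
    rw [this]
    rw [h2] at h1
    rw [h3] at h1
    linarith
  have hδ3 : b (zv - zu) (pv - pu) = -⟪T (pv - pu), T (pv - pu)⟫ := by
    have h1 : a rv (pv - pu) + b zv (pv - pu) = ⟪d - T pv, T (pv - pu)⟫ := hv3 _
    have h2 : a ru (pv - pu) + b zu (pv - pu) = ⟪d - T pu, T (pv - pu)⟫ := hu3 _
    have har : a rv (pv - pu) - a ru (pv - pu) = 0 := by
      have : a (rv - ru) (pv - pu) = a rv (pv - pu) - a ru (pv - pu) := by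
        simp only [map_sub, LinearMap.sub_apply]; ring
      rw [← this, ha, hδ4]
    have hb : b (zv - zu) (pv - pu) = b zv (pv - pu) - b zu (pv - pu) := by
      simp only [map_sub, LinearMap.sub_apply]; ring
    have hT : T (pv - pu) = T pv - T pu := map_sub T _ _
    have hrhs : ⟪d - T pv, T (pv - pu)⟫ - ⟪d - T pu, T (pv - pu)⟫
        = -⟪T (pv - pu), T (pv - pu)⟫ := by
      rw [← inner_sub_left]
      have : d - T pv - (d - T pu) = -(T pv - T pu) := by abel
      rw [this, ← hT, inner_neg_left]
    rw [hb]
    linarith [h1, h2, hrhs]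
  have key : ⟪(zv : H) - (zu : H), v - u⟫ = ‖T (pv - pu)‖ ^ 2 := by
    have h := hδ2 (zv - zu)
    rw [hδ3] at h
    have hc : ((zv - zu : W) : H) = (zv : H) - (zu : H) := rfl
    rw [hc] at h
    have h' : ⟪v - u, (zv : H) - (zu : H)⟫ = ⟪T (pv - pu), T (pv - pu)⟫ := by linarith
    rw [real_inner_comm, h', real_inner_self_eq_norm_sq]
  rw [hJ'u, hJ'v]
  have h1 : ⟪v, v - u⟫ - ⟪u, v - u⟫ = ‖v - u‖ ^ 2 := by
    rw [← inner_sub_left, real_inner_self_eq_norm_sq]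
  have h2 : ⟪(zv : H), v - u⟫ - ⟪(zu : H), v - u⟫ = ‖T (pv - pu)‖ ^ 2 := by
    rw [← inner_sub_left, key]
  nlinarith [h1, h2]
end

section
/- Let H and G be real Hilbert spaces, W a subspace of H, V a real vector space, T : V → G a linear map, a : V × V → ℝ a symmetric bilinear form, and b : W × V → ℝ a bilinear form. Fix f ∈ H, g ∈ G, d ∈ G, γ > 0, and let U_ad ⊆ H. Suppose u, u_h ∈ U_ad, the quadruples (p_u, y_u, r_u, z_u) and (p_{u_h}, y_{u_h}, r_{u_h}, z_{u_h}) solve the discrete optimality system for u and for u_h respectively, and z ∈ H satisfies: ⟨γu + z, v − u⟩_H ≥ 0 for all v ∈ U_ad (continuous variational inequality) and ⟨γu_h + z_{u_h}, v − u_h⟩_H ≥ 0 for all v ∈ U_ad (discrete variational inequality). Then γ‖u − u_h‖²_H + ‖T(p_u − p_{u_h})‖²_G ≤ ⟨z_u − z, u − u_h⟩_H. (This is the key estimate (4.18)–(4.19) in the proof of Theorem 4.1, prior to invoking auxiliary error bounds.) -/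
open scoped RealInnerProductSpace

/-- **estimate (4.18)–(4.19) in Theorem 4.1.** Let `u, u_h ∈ U_ad`, let
`(p_u, y_u, r_u, z_u)` and `(p_{u_h}, y_{u_h}, r_{u_h}, z_{u_h})` solve the discrete
optimality system for `u` and `u_h` respectively (with `a` symmetric), and let `z ∈ H`
satisfy the continuous variational inequality `⟨γu + z, v − u⟩ ≥ 0` for all `v ∈ U_ad`,
while `⟨γu_h + z_{u_h}, v − u_h⟩ ≥ 0` for all `v ∈ U_ad` (discrete variational
inequality). Then `γ‖u − u_h‖²_H + ‖T(p_u − p_{u_h})‖²_G ≤ ⟨z_u − z, u − u_h⟩_H`. -/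
theorem stmt_6 {H G V : Type*}
    [NormedAddCommGroup H] [InnerProductSpace ℝ H]
    [NormedAddCommGroup G] [InnerProductSpace ℝ G]
    [AddCommGroup V] [Module ℝ V]
    (W : Submodule ℝ H) (T : V →ₗ[ℝ] G)
    (a : V →ₗ[ℝ] V →ₗ[ℝ] ℝ) (b : W →ₗ[ℝ] V →ₗ[ℝ] ℝ)
    (ha : ∀ v w : V, a v w = a w v)
    (f : H) (g : G) (d : G) (γ : ℝ) (hγ : 0 < γ)
    (Uad : Set H) (u uh : H) (hu : u ∈ Uad) (huh : uh ∈ Uad)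
    (pu puh : V) (yu yuh : W) (ru ruh : V) (zu zuh : W)
    (hsysu : SolvesDiscreteSystem W T a b f g d u pu yu ru zu)
    (hsysuh : SolvesDiscreteSystem W T a b f g d uh puh yuh ruh zuh)
    (z : H)
    (hVIcont : ∀ v ∈ Uad, 0 ≤ ⟪γ • u + z, v - u⟫)
    (hVIdisc : ∀ v ∈ Uad, 0 ≤ ⟪γ • uh + (zuh : H), v - uh⟫) :
    γ * ‖u - uh‖ ^ 2 + ‖T (pu - puh)‖ ^ 2 ≤ ⟪(zu : H) - z, u - uh⟫ := by

  obtain ⟨hu1, hu2, hu3, hu4⟩ := hsysu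
  obtain ⟨hh1, hh2, hh3, hh4⟩ := hsysuh
  -- difference equations
  have e1 : ∀ v : V, a (pu - puh) v + b (yu - yuh) v = 0 := by
    intro v
    have h1 := hu1 v; have h2 := hh1 v
    simp only [map_sub, LinearMap.sub_apply]
    linarith
  have e2 : ∀ w : W, b w (pu - puh) = -⟪u - uh, (w : H)⟫ := by
    intro w
    have h1 := hu2 w; have h2 := hh2 w
    simp only [inner_add_left, inner_sub_left] at h1 h2 ⊢
    rw [map_sub]
    linarith
  have e3 : ∀ v : V, a (ru - ruh) v + b (zu - zuh) v = -⟪T (pu - puh), T v⟫ := by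
    intro v
    have h1 := hu3 v; have h2 := hh3 v
    simp only [inner_sub_left, map_sub, LinearMap.sub_apply] at h1 h2 ⊢
    linarith
  have e4 : ∀ w : W, b w (ru - ruh) = 0 := by
    intro w
    have h1 := hu4 w; have h2 := hh4 w
    rw [map_sub]
    linarith
  -- a(δp, δr) = 0
  have hA : a (pu - puh) (ru - ruh) = 0 := by
    have := e1 (ru - ruh)
    have h4 := e4 (yu - yuh)
    linarith
  -- b(δz, δp) = -‖T δp‖²
  have hB : b (zu - zuh) (pu - puh) = -‖T (pu - puh)‖ ^ 2 := by
    have h3 := e3 (pu - puh)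
    have hsy : a (ru - ruh) (pu - puh) = 0 := by rw [ha]; exact hA
    rw [real_inner_self_eq_norm_sq] at h3
    linarith
  -- key identity: ⟪zu - zuh, u - uh⟫ = ‖T δp‖²
  have hkey : ⟪(zu : H) - (zuh : H), u - uh⟫ = ‖T (pu - puh)‖ ^ 2 := by
    have h2 := e2 (zu - zuh)
    rw [hB] at h2
    have hc : ((zu - zuh : W) : H) = (zu : H) - (zuh : H) := rfl
    rw [hc] at h2
    have := real_inner_comm ((zu : H) - (zuh : H)) (u - uh)
    linarith
  -- variational inequalities
  have hv1 := hVIcont uh huh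
  have hv2 := hVIdisc u hu
  have hn : ⟪u - uh, u - uh⟫ = ‖u - uh‖ ^ 2 := real_inner_self_eq_norm_sq _
  simp only [inner_add_left, inner_sub_left, inner_sub_right, real_inner_smul_left] at hv1 hv2 hkey hn ⊢
  nlinarith [hv1, hv2, hkey, hn]
end

section
/- Let H be a real inner product space, W a subspace of H, and V a real normed space. Let a : V × V → ℝ be a bilinear form that is continuous and coercive, i.e. there exist M > 0 and α > 0 with |a(v, w)| ≤ M‖v‖‖w‖ and a(v, v) ≥ α‖v‖² for all v, w ∈ V, and let b : W × V → ℝ be a bilinear form satisfying the inf-sup condition: there is β > 0 such that for every w ∈ W, β‖w‖ ≤ sup_{v ∈ V, v ≠ 0} b(w, v)/‖v‖. Suppose Δp ∈ V, Δy ∈ W, and e ∈ H satisfy a(Δp, v) + b(Δy, v) = 0 for all v ∈ V and b(w, Δp) = ⟨e, w⟩ for all w ∈ W. Then ‖Δy‖ ≤ (M/β)‖Δp‖, ‖Δp‖ ≤ (M/(αβ))‖e‖, and consequently ‖Δy‖ ≤ (M²/(αβ²))‖e‖. (This abstracts the estimates (4.15)–(4.17) bounding ‖y_h(u) − y_h‖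 and ‖p_h(u) − p_h‖ by C‖u − u_h‖ in the proof of Theorem 4.1.) -/
open scoped RealInnerProductSpace

/-- **abstracting (4.15)–(4.17) in Theorem 4.1.** Let `H` be a real inner
product space, `W` a subspace of `H` (with the induced norm), `V` a real normed space.
Let `a : V × V → ℝ` be bilinear, continuous (`|a(v,w)| ≤ M‖v‖‖w‖`) and coercive
(`a(v,v) ≥ α‖v‖²`), and let `b : W × V → ℝ` be bilinear satisfying the inf-sup condition
`β‖w‖ ≤ sup_{v ≠ 0} b(w,v)/‖v‖` for every `w ∈ W` (stated here in the equivalent form: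
every real number below `β‖w‖` is exceeded by some quotient `b(w,v)/‖v‖` with `v ≠ 0`).
If `a(Δp, v) + b(Δy, v) = 0` for all `v ∈ V` and `b(w, Δp) = ⟨e, w⟩` for all `w ∈ W`,
then `‖Δy‖ ≤ (M/β)‖Δp‖`, `‖Δp‖ ≤ (M/(αβ))‖e‖` and `‖Δy‖ ≤ (M²/(αβ²))‖e‖`. -/
theorem stmt_7 {H V : Type*}
    [NormedAddCommGroup H] [InnerProductSpace ℝ H]
    [NormedAddCommGroup V] [NormedSpace ℝ V]
    (W : Submodule ℝ H)
    (a : V →ₗ[ℝ] V →ₗ[ℝ] ℝ) (b : W →ₗ[ℝ] V →ₗ[ℝ] ℝ)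
    (M α β : ℝ) (hM : 0 < M) (hα : 0 < α) (hβ : 0 < β)
    (hcont : ∀ v w : V, |a v w| ≤ M * ‖v‖ * ‖w‖)
    (hcoer : ∀ v : V, α * ‖v‖ ^ 2 ≤ a v v)
    (hinfsup : ∀ w : W, ∀ c : ℝ, c < β * ‖w‖ → ∃ v : V, v ≠ 0 ∧ c < b w v / ‖v‖)
    (Δp : V) (Δy : W) (e : H)
    (heq1 : ∀ v : V, a Δp v + b Δy v = 0)
    (heq2 : ∀ w : W, b w Δp = ⟪e, (w : H)⟫) :
    ‖Δy‖ ≤ (M / β) * ‖Δp‖ ∧ ‖Δp‖ ≤ (M / (α * β)) * ‖e‖ ∧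
      ‖Δy‖ ≤ (M ^ 2 / (α * β ^ 2)) * ‖e‖ := by
  -- Step 1: β‖Δy‖ ≤ M‖Δp‖
  have h1 : β * ‖Δy‖ ≤ M * ‖Δp‖ := by
    by_contra h
    push_neg at h
    obtain ⟨v, hv, hlt⟩ := hinfsup Δy (M * ‖Δp‖) h
    have hvpos : (0:ℝ) < ‖v‖ := norm_pos_iff.mpr hv
    have hb : b Δy v = -(a Δp v) := by linarith [heq1 v]
    have hbound : b Δy v / ‖v‖ ≤ M * ‖Δp‖ := by
      rw [div_le_iff₀ hvpos, hb]
      have h2 := hcont Δp v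
      have h3 : -(a Δp v) ≤ |a Δp v| := neg_le_abs _
      linarith
    linarith
  have hy : ‖Δy‖ ≤ (M / β) * ‖Δp‖ := by
    rw [div_mul_eq_mul_div, le_div_iff₀ hβ]
    linarith
  -- Step 2: α‖Δp‖² ≤ ‖e‖‖Δy‖
  have h2 : α * ‖Δp‖ ^ 2 ≤ ‖e‖ * ‖Δy‖ := by
    have hc := hcoer Δp
    have hbp : a Δp Δp = -(b Δy Δp) := by linarith [heq1 Δp]
    have hin : b Δy Δp = ⟪e, (Δy : H)⟫ := heq2 Δy
    have habs : |⟪e, (Δy : H)⟫| ≤ ‖e‖ * ‖(Δy : H)‖ := abs_real_inner_le_norm e (Δy : H)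
    have hnorm : ‖(Δy : H)‖ = ‖Δy‖ := rfl
    have : -(⟪e, (Δy : H)⟫) ≤ |⟪e, (Δy : H)⟫| := neg_le_abs _
    rw [hnorm] at habs
    linarith
  have hp : ‖Δp‖ ≤ (M / (α * β)) * ‖e‖ := by
    rcases eq_or_lt_of_le (norm_nonneg Δp) with h0 | h0
    · rw [← h0]
      positivity
    · have h3 : α * ‖Δp‖ ^ 2 ≤ ‖e‖ * ((M / β) * ‖Δp‖) :=
        h2.trans (by nlinarith [norm_nonneg e])
      rw [div_mul_eq_mul_div, le_div_iff₀ (by positivity)]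
      have h4 : β * (α * ‖Δp‖ ^ 2) ≤ β * (‖e‖ * (M / β * ‖Δp‖)) := by nlinarith
      have h5 : β * (M / β) = M := by field_simp
      nlinarith [h4, h5, h0, norm_nonneg e]
  refine ⟨hy, hp, ?_⟩
  calc ‖Δy‖ ≤ (M / β) * ‖Δp‖ := hy
    _ ≤ (M / β) * ((M / (α * β)) * ‖e‖) := by
        apply mul_le_mul_of_nonneg_left hp (by positivity)
    _ = (M ^ 2 / (α * β ^ 2)) * ‖e‖ := by ring
end

section
/- Let H and G be real Hilbert spaces, W a subspace of H, V a real vector space, T : V → G a linear map, a : V × V → ℝ a symmetric bilinear form, and b : W × V → ℝ a bilinear form. Suppose d ∈ W and η ∈ G, and there exist ψ ∈ V, φ ∈ W, and Δr ∈ V such that: a(ψ, v) + b(φ, v) = 0 for all v ∈ V; b(w, ψ) = ⟨d, w⟩_H for all w ∈ W; a(Δr, v) + b(d, v) = ⟨η, T v⟩_G for all v ∈ V; and b(w, Δr) = 0 for all w ∈ W. Then ‖d‖²_H = ⟨η, T ψ⟩_G. (This is the algebraic duality identity underlying the estimate (4.29) of ‖z_h(u) − z_h‖ in the proof of Theorem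 4.1, where d = z_h(u) − z_h, η = T(p_h − p_h(u)), and (ψ, φ) is the discrete solution of the dual problem.) -/
open scoped RealInnerProductSpace

/-- **duality identity behind (4.29) in Theorem 4.1.** Let `H, G` be real
Hilbert spaces, `W` a subspace of `H`, `V` a real vector space, `T : V → G` linear,
`a : V × V → ℝ` a symmetric bilinear form, `b : W × V → ℝ` bilinear. Suppose `d ∈ W`,
`η ∈ G`, and there exist `ψ ∈ V`, `φ ∈ W`, `Δr ∈ V` with
`a(ψ, v) + b(φ, v) = 0` for all `v ∈ V`, `b(w, ψ) = ⟨d, w⟩_H` for all `w ∈ W`,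
`a(Δr, v) + b(d, v) = ⟨η, T v⟩_G` for all `v ∈ V`, and `b(w, Δr) = 0` for all `w ∈ W`.
Then `‖d‖²_H = ⟨η, T ψ⟩_G`. -/
theorem stmt_8 {H G V : Type*}
    [NormedAddCommGroup H] [InnerProductSpace ℝ H] [CompleteSpace H]
    [NormedAddCommGroup G] [InnerProductSpace ℝ G] [CompleteSpace G]
    [AddCommGroup V] [Module ℝ V]
    (W : Submodule ℝ H) (T : V →ₗ[ℝ] G)
    (a : V →ₗ[ℝ] V →ₗ[ℝ] ℝ) (b : W →ₗ[ℝ] V →ₗ[ℝ] ℝ)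
    (ha : ∀ v w : V, a v w = a w v)
    (d : W) (η : G) (ψ : V) (φ : W) (Δr : V)
    (h1 : ∀ v : V, a ψ v + b φ v = 0)
    (h2 : ∀ w : W, b w ψ = ⟪(d : H), (w : H)⟫)
    (h3 : ∀ v : V, a Δr v + b d v = ⟪η, T v⟫)
    (h4 : ∀ w : W, b w Δr = 0) :
    ‖(d : H)‖ ^ 2 = ⟪η, T ψ⟫ := by
  have haux : a Δr ψ = 0 := by
    have := h1 Δr
    rw [ha Δr ψ]
    linarith [h4 φ]
  have : ‖(d : H)‖ ^ 2 = ⟪(d : H), (d : H)⟫ := (real_inner_self_eq_norm_sq _).symm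
  rw [this, ← h2 d]
  have := h3 ψ
  linarith
end
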